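/- The optimal objective value of the original max-k-cut problem equals the optimal objective value of the reduced problem: for every k ≥ 1, the maximum of f(x) over all assignments x : V → Fin k equals the maximum of f_R(y) over all assignments y : (ℤ × ℤ × ℤ) → Fin k. -/
import Mathlib


open Finset

variable {V : Type*} [Fintype V]

def wgt (s : V → ℤ × ℤ × ℤ) (i j : V) : ℤ :=
  |(s i).1 - (s j).1| + |(s i).2.1 - (s j).2.1| + |(s i).2.2 - (s j).2.2|

def objf (s : V → ℤ × ℤ × ℤ) {k : ℕ} (x : V → Fin k) : ℤ :=
  ∑ i : V, ∑ j : V, if x i ≠ x j then wgt s i j else 0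

def wgt' (s : V → ℤ × ℤ × ℤ) (a b : ℤ × ℤ × ℤ) : ℤ :=
  ∑ i ∈ univ.filter (fun i => s i = a), ∑ j ∈ univ.filter (fun j => s j = b), wgt s i j

def objR (s : V → ℤ × ℤ × ℤ) {k : ℕ} (y : ℤ × ℤ × ℤ → Fin k) : ℤ :=
  ∑ a ∈ univ.image s, ∑ b ∈ univ.image s, if y a ≠ y b then wgt' s a b else 0

omit [Fintype V] in
lemma wgt_comm (s : V → ℤ × ℤ × ℤ) (i j : V) : wgt s i j = wgt s j i := by
  simp [wgt, abs_sub_comm]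

omit [Fintype V] in
lemma wgt_zero {s : V → ℤ × ℤ × ℤ} {i j : V} (h : s i = s j) : wgt s i j = 0 := by
  simp [wgt, h]

def badset (s : V → ℤ × ℤ × ℤ) {k : ℕ} (x : V → Fin k) : Finset (ℤ × ℤ × ℤ) :=
  (univ.image s).filter (fun a => ∃ i j, s i = a ∧ s j = a ∧ x i ≠ x j)

lemma step (s : V → ℤ × ℤ × ℤ) {k : ℕ} (x : V → Fin k) (a : ℤ × ℤ × ℤ)
    (i1 j1 : V) (hi1 : s i1 = a) (hj1 : s j1 = a) (hne : x i1 ≠ x j1) :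
    ∃ x' : V → Fin k, objf s x ≤ objf s x' ∧ (badset s x').card < (badset s x).card := by
  classical
  set F : Finset V := univ.filter (fun i => s i = a) with hF
  set Fc : Finset V := univ.filter (fun i => ¬ s i = a) with hFc
  have hFne : F.Nonempty := ⟨i1, by simp [hF, hi1]⟩
  set da : V → ℤ := fun j => |a.1 - (s j).1| + |a.2.1 - (s j).2.1| + |a.2.2 - (s j).2.2|
    with hda
  set cross : Fin k → ℤ := fun u => ∑ j ∈ Fc, if x j = u then da j else 0 with hcross
  obtain ⟨i0, hi0, hmin⟩ := Finset.exists_min_image F (fun i => cross (x i)) hFne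
  set t := x i0 with ht
  set x' : V → Fin k := fun i => if s i = a then t else x i with hx'
  have hx'F : ∀ i ∈ F, x' i = t := fun i hi => by
    simp only [hF, mem_filter] at hi; simp [hx', hi.2]
  have hx'Fc : ∀ i ∈ Fc, x' i = x i := fun i hi => by
    simp only [hFc, mem_filter] at hi; simp [hx', hi.2]
  have hwgtF : ∀ i ∈ F, ∀ j : V, wgt s i j = da j := by
    intro i hi j
    simp only [hF, mem_filter] at hi
    simp [wgt, hda, hi.2]
  -- the "same-group" objective
  set g : (V → Fin k) → ℤ := fun z => ∑ i : V, ∑ j : V, if z i = z j then wgt s i j else 0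
    with hg
  have hcompl : ∀ z : V → Fin k, objf s z + g z = ∑ i : V, ∑ j : V, wgt s i j := by
    intro z
    unfold objf
    simp only [hg]
    rw [← Finset.sum_add_distrib]
    refine Finset.sum_congr rfl fun i _ => ?_
    rw [← Finset.sum_add_distrib]
    refine Finset.sum_congr rfl fun j _ => ?_
    by_cases h : z i = z j <;> simp [h]
  have hsplit : ∀ f : V → V → ℤ, ∑ i : V, ∑ j : V, f i j =
      ((∑ i ∈ F, ∑ j ∈ F, f i j) + (∑ i ∈ F, ∑ j ∈ Fc, f i j)) +
      ((∑ i ∈ Fc, ∑ j ∈ F, f i j) + (∑ i ∈ Fc, ∑ j ∈ Fc, f i j)) := by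
    intro f
    rw [← Finset.sum_filter_add_sum_filter_not univ (fun i => s i = a)
      (fun i => ∑ j : V, f i j)]
    congr 1 <;>
    · rw [← Finset.sum_add_distrib]
      exact Finset.sum_congr rfl fun i _ =>
        (Finset.sum_filter_add_sum_filter_not univ (fun j => s j = a) (f i)).symm
  -- the F×F block vanishes
  have hFF : ∀ z : V → Fin k, (∑ i ∈ F, ∑ j ∈ F, if z i = z j then wgt s i j else 0) = 0 := by
    intro z
    refine Finset.sum_eq_zero fun i hi => Finset.sum_eq_zero fun j hj => ?_
    simp only [hF, mem_filter] at hi hj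
    have : wgt s i j = 0 := wgt_zero (by rw [hi.2, hj.2])
    simp [this]
  -- the Fc×Fc block agrees
  have hOO : (∑ i ∈ Fc, ∑ j ∈ Fc, if x' i = x' j then wgt s i j else 0)
      = ∑ i ∈ Fc, ∑ j ∈ Fc, if x i = x j then wgt s i j else 0 := by
    refine Finset.sum_congr rfl fun i hi => Finset.sum_congr rfl fun j hj => ?_
    rw [hx'Fc i hi, hx'Fc j hj]
  -- F × Fc blocks
  have hFO : ∀ z : V → Fin k, (∀ i ∈ F, ∀ j ∈ Fc, z j = x j) →
      (∑ i ∈ F, ∑ j ∈ Fc, if z i = z j then wgt s i j else 0) = ∑ i ∈ F, cross (z i) := by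
    intro z hz
    refine Finset.sum_congr rfl fun i hi => ?_
    rw [hcross]
    refine Finset.sum_congr rfl fun j hj => ?_
    rw [hwgtF i hi j, hz i hi j hj]
    exact (if_congr eq_comm rfl rfl).symm
  have hOF : ∀ z : V → Fin k, (∀ j ∈ F, ∀ i ∈ Fc, z i = x i) →
      (∑ i ∈ Fc, ∑ j ∈ F, if z i = z j then wgt s i j else 0) = ∑ j ∈ F, cross (z j) := by
    intro z hz
    rw [Finset.sum_comm]
    refine Finset.sum_congr rfl fun j hj => ?_
    rw [hcross]
    refine Finset.sum_congr rfl fun i hi => ?_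
    rw [wgt_comm, hwgtF j hj i, hz j hj i hi]
  have hgx : g x = ((0 + ∑ i ∈ F, cross (x i)) +
      ((∑ j ∈ F, cross (x j)) + ∑ i ∈ Fc, ∑ j ∈ Fc, if x i = x j then wgt s i j else 0)) := by
    simp only [hg]
    rw [hsplit (fun i j => if x i = x j then wgt s i j else 0)]
    rw [hFF x, hFO x (fun _ _ _ _ => rfl), hOF x (fun _ _ _ _ => rfl)]
  have hgx' : g x' = ((0 + ∑ i ∈ F, cross t) +
      ((∑ j ∈ F, cross t) + ∑ i ∈ Fc, ∑ j ∈ Fc, if x i = x j then wgt s i j else 0)) := by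
    simp only [hg]
    rw [hsplit (fun i j => if x' i = x' j then wgt s i j else 0)]
    rw [hFF x', hOO,
      hFO x' (fun i _ j hj => hx'Fc j hj), hOF x' (fun _ _ i hi => hx'Fc i hi)]
    have e : ∀ i ∈ F, cross (x' i) = cross t := fun i hi => by rw [hx'F i hi]
    rw [Finset.sum_congr rfl e]
  have hgle : g x' ≤ g x := by
    rw [hgx, hgx']
    have h1 : ∑ i ∈ F, cross t ≤ ∑ i ∈ F, cross (x i) :=
      Finset.sum_le_sum fun i hi => hmin i hi
    omega
  have hobj : objf s x ≤ objf s x' := by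
    have h1 := hcompl x
    have h2 := hcompl x'
    omega
  refine ⟨x', hobj, ?_⟩
  -- badset decreases
  have haout : a ∉ badset s x' := by
    simp only [badset, mem_filter]
    rintro ⟨-, i, j, hia, hja, hij⟩
    exact hij (by rw [hx'F i (by simp [hF, hia]), hx'F j (by simp [hF, hja])])
  have hain : a ∈ badset s x := by
    simp only [badset, mem_filter]
    exact ⟨hi1 ▸ mem_image_of_mem s (mem_univ i1), i1, j1, hi1, hj1, hne⟩
  have hsub : badset s x' ⊆ badset s x := by
    intro b hb
    have hb0 := hb
    simp only [badset, mem_filter] at hb ⊢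
    obtain ⟨hbim, i, j, hib, hjb, hij⟩ := hb
    have hba : b ≠ a := fun h => haout (h ▸ hb0)
    exact ⟨hbim, i, j, hib, hjb, by
      rwa [hx'Fc i (by simp [hFc, hib, hba]), hx'Fc j (by simp [hFc, hjb, hba])] at hij⟩
  exact Finset.card_lt_card ((Finset.ssubset_iff_of_subset hsub).2 ⟨a, hain, haout⟩)

lemma objR_eq_objf (s : V → ℤ × ℤ × ℤ) {k : ℕ} (y : ℤ × ℤ × ℤ → Fin k) :
    objR s y = objf s (y ∘ s) := by
  unfold objR objf
  rw [← Finset.sum_fiberwise_of_maps_to (g := s)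
    (fun i (_ : i ∈ univ) => Finset.mem_image_of_mem s (mem_univ i))
    (f := fun i => ∑ j : V, if (y ∘ s) i ≠ (y ∘ s) j then wgt s i j else 0)]
  refine Finset.sum_congr rfl fun a ha => ?_
  have h1 : ∀ i ∈ univ.filter (fun i => s i = a),
      (∑ j : V, if (y ∘ s) i ≠ (y ∘ s) j then wgt s i j else 0)
      = ∑ b ∈ univ.image s, ∑ j ∈ univ.filter (fun j => s j = b),
          if (y ∘ s) i ≠ (y ∘ s) j then wgt s i j else 0 := fun i _ =>
    (Finset.sum_fiberwise_of_maps_to (fun j (_ : j ∈ univ) =>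
      Finset.mem_image_of_mem s (mem_univ j)) _).symm
  rw [Finset.sum_congr rfl h1, Finset.sum_comm]
  refine Finset.sum_congr rfl fun b hb => ?_
  by_cases h : y a ≠ y b
  · rw [if_pos h]
    unfold wgt'
    refine Finset.sum_congr rfl fun i hi => Finset.sum_congr rfl fun j hj => ?_
    simp only [mem_filter, mem_univ, true_and] at hi hj
    simp [Function.comp, hi, hj, h]
  · rw [if_neg h]
    refine (Finset.sum_eq_zero fun i hi => Finset.sum_eq_zero fun j hj => ?_).symm
    simp only [mem_filter, mem_univ, true_and] at hi hj
    simp [Function.comp, hi, hj, h]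

lemma key (s : V → ℤ × ℤ × ℤ) {k : ℕ} (hk : 1 ≤ k) (x : V → Fin k) :
    ∃ y : ℤ × ℤ × ℤ → Fin k, objf s x ≤ objR s y := by
  classical
  suffices H : ∀ n (x : V → Fin k), (badset s x).card = n →
      ∃ y : ℤ × ℤ × ℤ → Fin k, objf s x ≤ objR s y from H _ x rfl
  intro n
  induction n using Nat.strong_induction_on with
  | _ n ih =>
    intro x hn
    by_cases hb : badset s x = ∅
    · have hc : ∀ i j, s i = s j → x i = x j := by
        intro i j hij
        by_contra hne
        have : s i ∈ badset s x :=
          mem_filter.2 ⟨mem_image_of_mem s (mem_univ i), i, j, rfl, hij.symm, hne⟩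
        simp [hb] at this
      refine ⟨fun a => if h : ∃ i, s i = a then x h.choose else ⟨0, hk⟩, le_of_eq ?_⟩
      rw [objR_eq_objf]
      congr 1
      funext i
      have h : ∃ i', s i' = s i := ⟨i, rfl⟩
      simp only [Function.comp, dif_pos h]
      exact (hc _ _ h.choose_spec).symm
    · obtain ⟨a, ha⟩ := Finset.nonempty_iff_ne_empty.2 hb
      obtain ⟨-, i1, j1, hi1, hj1, hne⟩ := mem_filter.1 ha
      obtain ⟨x', hle, hlt⟩ := step s x a i1 j1 hi1 hj1 hne
      obtain ⟨y, hy⟩ := ih (badset s x').card (hn ▸ hlt) x' rfl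
      exact ⟨y, hle.trans hy⟩

/-- The optimal value of the original max-k-cut problem equals the optimal value
of the reduced problem. -/
theorem original_and_reduced_have_equal_optimal_values
    (s : V → ℤ × ℤ × ℤ) (k : ℕ) (hk : 1 ≤ k) :
    ∃ m : ℤ, IsGreatest (Set.range fun x : V → Fin k => objf s x) m ∧
      IsGreatest (Set.range fun y : ℤ × ℤ × ℤ → Fin k => objR s y) m := by
  classical
  haveI : Nonempty (Fin k) := ⟨⟨0, hk⟩⟩
  set T : Finset ℤ := Finset.image (fun x : V → Fin k => objf s x) univ with hT
  have hTne : T.Nonempty := ⟨objf s (Classical.arbitrary _),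
    mem_image_of_mem _ (mem_univ _)⟩
  set m := T.max' hTne with hm
  have hub : ∀ x : V → Fin k, objf s x ≤ m :=
    fun x => T.le_max' _ (mem_image_of_mem _ (mem_univ x))
  obtain ⟨x0, -, hx0⟩ := mem_image.1 (T.max'_mem hTne)
  obtain ⟨y0, hy0⟩ := key s hk x0
  have hy0m : objR s y0 = m := le_antisymm
    (by rw [objR_eq_objf]; exact hub _) (le_trans (le_of_eq hx0.symm) hy0)
  refine ⟨m, ⟨⟨x0, hx0⟩, ?_⟩, ⟨y0, hy0m⟩, ?_⟩
  · rintro v ⟨x, rfl⟩; exact hub x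
  · rintro v ⟨y, rfl⟩
    simp only []
    rw [objR_eq_objf]; exact hub _
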